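/- For every natural number k and z a standard normal random variable, E[(He_{2k+1}(z))² · He_{2k}(z)] ≠ 0. -/

import Mathlib

open MeasureTheory ProbabilityTheory

namespace HermiteAux

open Polynomial Real Filter

/-- The real Hermite polynomial. -/
noncomputable def Herm (n : ℕ) : Polynomial ℝ :=
  (Polynomial.hermite n).map (Int.castRingHom ℝ)

/-- The Gaussian weight. -/
noncomputable def G (x : ℝ) : ℝ := Real.exp (-x ^ 2 / 2)

/-- Integral of a polynomial against the (unnormalized) Gaussian weight. -/
noncomputable def J (p : Polynomial ℝ) : ℝ := ∫ x : ℝ, p.eval x * G x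

lemma integrable_pow_gauss (n : ℕ) :
    Integrable (fun x : ℝ => x ^ n * G x) := by
  obtain ⟨C, hC⟩ : ∃ C, ∀ x : ℝ, |x| ^ n * Real.exp (-(1/4 : ℝ) * x ^ 2) ≤ C := by
    have hcont : Continuous fun x : ℝ => |x| ^ n * Real.exp (-(1/4 : ℝ) * x ^ 2) := by
      continuity
    have htend : Tendsto (fun x : ℝ => |x| ^ n * Real.exp (-(1/4 : ℝ) * x ^ 2))
        (cocompact ℝ) (nhds 0) := by
      simpa [Real.rpow_natCast] using
        tendsto_rpow_abs_mul_exp_neg_mul_sq_cocompact (a := (1/4 : ℝ)) (by norm_num) n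
    obtain ⟨s, hs, hsub⟩ := mem_cocompact.mp (htend (Metric.ball_mem_nhds (0:ℝ) one_pos))
    obtain ⟨C0, hC0⟩ := hs.exists_bound_of_continuousOn hcont.continuousOn
    refine ⟨max C0 1, fun x => ?_⟩
    by_cases hx : x ∈ s
    · exact le_max_of_le_left ((Real.le_norm_self _).trans (hC0 x hx))
    · refine le_max_of_le_right ((le_abs_self _).trans ?_)
      have hx' := hsub hx
      simp only [Set.mem_preimage, Metric.mem_ball, Real.dist_eq, sub_zero] at hx'
      exact hx'.le
  refine (((integrable_exp_neg_mul_sq (show (0:ℝ) < 1/4 by norm_num)).const_mul C).mono'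
    ?_ (Filter.Eventually.of_forall fun x => ?_))
  · exact ((continuous_pow n).mul (by unfold G; continuity)).aestronglyMeasurable
  · have hG : G x = Real.exp (-(1/4 : ℝ) * x ^ 2) * Real.exp (-(1/4 : ℝ) * x ^ 2) := by
      rw [← Real.exp_add]; unfold G; ring_nf
    have h0 : ‖x ^ n * G x‖ = |x| ^ n * G x := by
      rw [Real.norm_eq_abs, abs_mul, abs_pow,
        abs_of_nonneg (le_of_lt (Real.exp_pos _) : (0:ℝ) ≤ G x)]
    rw [h0, hG, ← mul_assoc]
    exact mul_le_mul_of_nonneg_right (hC x) (Real.exp_pos _).le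

lemma integrable_eval_gauss (p : Polynomial ℝ) :
    Integrable (fun x : ℝ => p.eval x * G x) := by
  induction p using Polynomial.induction_on' with
  | monomial n a =>
      simpa [Polynomial.eval_monomial, mul_assoc] using ((integrable_pow_gauss n).const_mul a)
  | add p q hp hq =>
      simpa [Polynomial.eval_add, add_mul, Pi.add_def] using hp.add hq

lemma J_add (p q : Polynomial ℝ) : J (p + q) = J p + J q := by
  unfold J
  simp only [Polynomial.eval_add, add_mul]
  exact integral_add (integrable_eval_gauss p) (integrable_eval_gauss q)

lemma J_sub (p q : Polynomial ℝ) : J (p - q) = J p - J q := by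
  unfold J
  simp only [Polynomial.eval_sub, sub_mul]
  exact integral_sub (integrable_eval_gauss p) (integrable_eval_gauss q)

lemma J_C_mul (a : ℝ) (p : Polynomial ℝ) : J (Polynomial.C a * p) = a * J p := by
  unfold J
  simp only [Polynomial.eval_mul, Polynomial.eval_C, mul_assoc]
  exact integral_const_mul a _

lemma J_zero : J 0 = 0 := by unfold J; simp

lemma J_nsmul (m : ℕ) (p : Polynomial ℝ) : J (m • p) = (m : ℝ) * J p := by
  have h : (m • p : Polynomial ℝ) = Polynomial.C (m : ℝ) * p := by
    rw [nsmul_eq_mul, Polynomial.C_eq_natCast]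
  rw [h, J_C_mul]

lemma J_sum {ι : Type*} (s : Finset ι) (f : ι → Polynomial ℝ) :
    J (∑ i ∈ s, f i) = ∑ i ∈ s, J (f i) := by
  classical
  induction s using Finset.induction_on with
  | empty => simp [J_zero]
  | insert a s h ih => rw [Finset.sum_insert h, J_add, ih, Finset.sum_insert h]

/-- Gaussian integration by parts for polynomials. -/
lemma J_X_mul (p : Polynomial ℝ) : J (Polynomial.X * p) = J (Polynomial.derivative p) := by
  have key : ∫ x : ℝ,
      ((Polynomial.X * p).eval x - (Polynomial.derivative p).eval x) * G x = 0 := by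
    apply integral_eq_zero_of_hasDerivAt_of_integrable
      (f := fun x : ℝ => -(p.eval x * G x))
    · intro x
      have h1 : HasDerivAt (fun y : ℝ => p.eval y) ((Polynomial.derivative p).eval x) x :=
        p.hasDerivAt x
      have hu : HasDerivAt (fun y : ℝ => -y ^ 2 / 2) (-x) x := by
        have h := ((hasDerivAt_pow 2 x).neg).div_const 2
        exact h.congr_deriv (by norm_num; ring)
      have h2 : HasDerivAt G (G x * -x) x := hu.exp
      have := (h1.mul h2).neg
      convert this using 1
      · funext y; rfl
      · simp [Polynomial.eval_mul]
        ring
    · exact (integrable_eval_gauss (Polynomial.X * p - Polynomial.derivative p)).congr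
        (Filter.Eventually.of_forall fun x => by simp [Polynomial.eval_sub])
    · exact (integrable_eval_gauss p).neg
  have h2 : J (Polynomial.X * p) - J (Polynomial.derivative p) = 0 := by
    rw [← J_sub]
    unfold J
    rw [← key]
    congr 1
    funext x
    simp [Polynomial.eval_sub]
  linarith

lemma Herm_succ (n : ℕ) :
    Herm (n + 1) = Polynomial.X * Herm n - Polynomial.derivative (Herm n) := by
  unfold Herm
  rw [Polynomial.hermite_succ]
  simp [Polynomial.derivative_map]

/-- Key reduction: `J (Herm n * q) = J (q⁽ⁿ⁾)`. -/
lemma J_Herm_mul (n : ℕ) : ∀ q : Polynomial ℝ,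
    J (Herm n * q) = J ((Polynomial.derivative)^[n] q) := by
  induction n with
  | zero => intro q; simp [Herm, Polynomial.hermite_zero]
  | succ n ih =>
      intro q
      rw [Herm_succ, sub_mul, J_sub, mul_assoc, J_X_mul, Polynomial.derivative_mul, J_add,
        ih (Polynomial.derivative q), Function.iterate_succ_apply]
      ring

lemma natDegree_Herm (n : ℕ) : (Herm n).natDegree = n := by
  unfold Herm
  rw [Polynomial.natDegree_map_eq_of_injective]
  · exact Polynomial.natDegree_hermite
  · exact fun a b h => by simpa using h

lemma derivative_Herm (n : ℕ) :
    Polynomial.derivative (Herm (n + 1)) = Polynomial.C ((n + 1 : ℕ) : ℝ) * Herm n := by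
  induction n with
  | zero =>
      unfold Herm
      simp [Polynomial.hermite_one, Polynomial.hermite_zero]
  | succ n ih =>
      have hd : Polynomial.derivative (Herm n) = Polynomial.X * Herm n - Herm (n + 1) := by
        rw [Herm_succ]; ring
      have hC : (Polynomial.C (((n + 1) + 1 : ℕ) : ℝ)) =
          Polynomial.C (((n + 1) : ℕ) : ℝ) + 1 := by
        rw [← Polynomial.C_1, ← Polynomial.C_add]
        congr 1
        push_cast; ring
      rw [Herm_succ (n + 1), Polynomial.derivative_sub, Polynomial.derivative_mul,
        Polynomial.derivative_X, one_mul, ih, Polynomial.derivative_mul,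
        Polynomial.derivative_C, zero_mul, zero_add, hd, hC, Herm_succ n]
      ring

lemma iterate_derivative_Herm (n : ℕ) : ∀ j : ℕ, j ≤ n →
    (Polynomial.derivative)^[j] (Herm n) =
      Polynomial.C ((n.descFactorial j : ℕ) : ℝ) * Herm (n - j) := by
  intro j
  induction j with
  | zero => intro _; simp
  | succ j ih =>
      intro hj
      have hjn : j ≤ n := Nat.le_of_succ_le hj
      have hnj : n - j = (n - j - 1) + 1 := by omega
      rw [Function.iterate_succ_apply', ih hjn, Polynomial.derivative_mul,
        Polynomial.derivative_C, zero_mul, zero_add, hnj, derivative_Herm,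
        ← mul_assoc, ← Polynomial.C_mul]
      have h5 : n - (j + 1) = n - j - 1 := by omega
      rw [h5]
      congr 2
      rw [show n - j - 1 + 1 = n - j from by omega, Nat.descFactorial_succ]
      push_cast [Nat.cast_sub hjn]
      ring

lemma iterate_derivative_Herm_zero {n j : ℕ} (h : n < j) :
    (Polynomial.derivative)^[j] (Herm n) = 0 :=
  Polynomial.iterate_derivative_eq_zero (by rw [natDegree_Herm]; exact h)

lemma J_Herm (n : ℕ) (hn : 0 < n) : J (Herm n) = 0 := by
  have h : Herm n = Herm n * 1 := by ring
  rw [h, J_Herm_mul]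
  have h2 : (Polynomial.derivative)^[n] (1 : Polynomial ℝ) = 0 :=
    Polynomial.iterate_derivative_eq_zero (by simpa using hn)
  rw [h2, J_zero]

lemma J_Herm_mul_Herm_ne (a b : ℕ) (hab : a ≠ b) : J (Herm a * Herm b) = 0 := by
  rw [J_Herm_mul]
  rcases lt_or_gt_of_ne hab with h | h
  · rw [iterate_derivative_Herm b a (le_of_lt h), J_C_mul, J_Herm (b - a) (by omega)]
    ring
  · rw [iterate_derivative_Herm_zero h, J_zero]

lemma J_Herm_mul_Herm_self (a : ℕ) : J (Herm a * Herm a) = (a.factorial : ℝ) * J 1 := by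
  rw [J_Herm_mul, iterate_derivative_Herm a a le_rfl, Nat.sub_self, J_C_mul]
  congr 2
  · simp [Nat.descFactorial_self]
  · unfold Herm; simp [Polynomial.hermite_zero]

lemma J_one_pos : 0 < J 1 := by
  unfold J G
  simp only [Polynomial.eval_one, one_mul]
  rw [show (fun x : ℝ => Real.exp (-x ^ 2 / 2)) = fun x : ℝ => Real.exp (-(1/2 : ℝ) * x ^ 2) by
    funext x; ring_nf]
  rw [integral_gaussian]
  positivity

/-- The main computation: the triple product integral. -/
lemma J_main (k : ℕ) :
    J (Herm (2 * k) * (Herm (2 * k + 1) * Herm (2 * k + 1))) ≠ 0 := by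
  rw [J_Herm_mul, Polynomial.iterate_derivative_mul, J_sum]
  rw [Finset.sum_eq_single_of_mem k (Finset.mem_range.mpr (by omega))]
  · rw [show 2 * k - k = k from by omega,
      iterate_derivative_Herm (2 * k + 1) k (by omega),
      show 2 * k + 1 - k = k + 1 from by omega, J_nsmul]
    have h : Polynomial.C (((2 * k + 1).descFactorial k : ℕ) : ℝ) * Herm (k + 1) *
        (Polynomial.C (((2 * k + 1).descFactorial k : ℕ) : ℝ) * Herm (k + 1)) =
        Polynomial.C ((((2 * k + 1).descFactorial k : ℕ) : ℝ) *
          (((2 * k + 1).descFactorial k : ℕ) : ℝ)) * (Herm (k + 1) * Herm (k + 1)) := by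
      rw [Polynomial.C_mul]; ring
    rw [h, J_C_mul, J_Herm_mul_Herm_self]
    have h1 : (0:ℝ) < ((2 * k).choose k : ℝ) := by
      exact_mod_cast Nat.choose_pos (by omega : k ≤ 2 * k)
    have h2 : (0:ℝ) < (((2 * k + 1).descFactorial k : ℕ) : ℝ) := by
      have := Nat.descFactorial_eq_zero_iff_lt (n := 2 * k + 1) (k := k)
      have hne : (2 * k + 1).descFactorial k ≠ 0 := by
        intro h0
        have := this.mp h0
        omega
      exact_mod_cast Nat.pos_of_ne_zero hne
    have h3 : (0:ℝ) < ((k + 1).factorial : ℝ) := by exact_mod_cast (k + 1).factorial_pos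
    have h4 := J_one_pos
    positivity
  · intro j hj hjk
    rw [Finset.mem_range] at hj
    rw [iterate_derivative_Herm (2 * k + 1) (2 * k - j) (by omega),
      iterate_derivative_Herm (2 * k + 1) j (by omega),
      show 2 * k + 1 - (2 * k - j) = j + 1 from by omega, J_nsmul]
    have h : Polynomial.C (((2 * k + 1).descFactorial (2 * k - j) : ℕ) : ℝ) * Herm (j + 1) *
        (Polynomial.C (((2 * k + 1).descFactorial j : ℕ) : ℝ) * Herm (2 * k + 1 - j)) =
        Polynomial.C ((((2 * k + 1).descFactorial (2 * k - j) : ℕ) : ℝ) *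
          (((2 * k + 1).descFactorial j : ℕ) : ℝ)) *
          (Herm (j + 1) * Herm (2 * k + 1 - j)) := by
      rw [Polynomial.C_mul]; ring
    rw [h, J_C_mul, J_Herm_mul_Herm_ne (j + 1) (2 * k + 1 - j) (by omega)]
    ring

end HermiteAux

/-- The `n`-th probabilists' Hermite polynomial as a function `ℝ → ℝ`. -/
noncomputable def He (n : ℕ) (z : ℝ) : ℝ := Polynomial.aeval z (Polynomial.hermite n)

lemma He_eq (n : ℕ) (z : ℝ) : He n z = (HermiteAux.Herm n).eval z := by
  unfold He HermiteAux.Herm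
  rw [Polynomial.eval_map, Polynomial.aeval_def, algebraMap_int_eq]

/-- For every `k`, `E[(He_{2k+1}(z))² · He_{2k}(z)] ≠ 0` where `z ∼ N(0,1)`. -/
theorem hermite_square_times_prev_ne_zero (k : ℕ) :
    ∫ z, (He (2 * k + 1) z) ^ 2 * He (2 * k) z ∂(gaussianReal 0 1) ≠ 0 := by
  classical
  set P : Polynomial ℝ :=
    HermiteAux.Herm (2 * k) * (HermiteAux.Herm (2 * k + 1) * HermiteAux.Herm (2 * k + 1)) with hP
  have hval : ∀ z : ℝ, (He (2 * k + 1) z) ^ 2 * He (2 * k) z = P.eval z := by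
    intro z
    simp only [hP, Polynomial.eval_mul, He_eq]
    ring
  have hpdf : ∀ x : ℝ, gaussianPDFReal 0 1 x = (Real.sqrt (2 * Real.pi))⁻¹ * HermiteAux.G x := by
    intro x
    unfold gaussianPDFReal HermiteAux.G
    norm_num
  rw [gaussianReal_of_var_ne_zero 0 one_ne_zero]
  have hdens : gaussianPDF 0 1 = fun x => ((Real.toNNReal (gaussianPDFReal 0 1 x) : NNReal) : ENNReal) :=
    rfl
  rw [hdens,
    integral_withDensity_eq_integral_smul
      ((measurable_gaussianPDFReal 0 1).real_toNNReal)
      (fun z => (He (2 * k + 1) z) ^ 2 * He (2 * k) z)]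
  have heq : (∫ z : ℝ, (gaussianPDFReal 0 1 z).toNNReal • ((He (2 * k + 1) z) ^ 2 * He (2 * k) z))
      = (Real.sqrt (2 * Real.pi))⁻¹ * HermiteAux.J P := by
    unfold HermiteAux.J
    rw [← integral_const_mul]
    congr 1
    funext z
    rw [NNReal.smul_def, smul_eq_mul,
      Real.coe_toNNReal _ (gaussianPDFReal_nonneg 0 1 z), hval z, hpdf z]
    ring
  rw [heq]
  refine mul_ne_zero (inv_ne_zero ?_) (HermiteAux.J_main k)
  positivity
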